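/- Let X be a locally solid vector lattice and let T, S be linear operators on X with 0 ≤ T ≤ S. If S is a continuous orthomorphism, then T is a continuous orthomorphism. -/

import Mathlib

open Filter Topology Bornology Function Pointwise

/-- A set in a lattice-ordered group is solid if it contains every element
dominated in absolute value by one of its members. -/
def Solid {X : Type*} [Lattice X] [AddCommGroup X] (S : Set X) : Prop :=
  ∀ x y : X, |x| ≤ |y| → y ∈ S → x ∈ S

/-- The linear topology is locally solid: it admits a base at zero of solid sets. -/
def LocallySolid (X : Type*) [Lattice X] [AddCommGroup X] [TopologicalSpace X] : Prop :=
  ∀ V ∈ 𝓝 (0 : X), ∃ U ∈ 𝓝 (0 : X), Solid U ∧ U ⊆ V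

/-- Archimedean property of a vector lattice. -/
def ArchimedeanVL (X : Type*) [Lattice X] [AddCommGroup X] : Prop :=
  ∀ x y : X, (∀ n : ℕ, n • x ≤ y) → x ≤ 0

/-- A band preserving operator. -/
def BandPreserving {X : Type*} [Lattice X] [AddCommGroup X] [Module ℝ X]
    (T : X →ₗ[ℝ] X) : Prop :=
  ∀ x y : X, |x| ⊓ |y| = 0 → |T x| ⊓ |y| = 0

/-- An order bounded operator: it maps order intervals into order intervals. -/
def OrderBounded {X : Type*} [Lattice X] [AddCommGroup X] [Module ℝ X]
    (T : X →ₗ[ℝ] X) : Prop :=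
  ∀ a b : X, ∃ c d : X, T '' Set.Icc a b ⊆ Set.Icc c d

/-- An orthomorphism: an order bounded band preserving operator. -/
def Orthomorphism {X : Type*} [Lattice X] [AddCommGroup X] [Module ℝ X]
    (T : X →ₗ[ℝ] X) : Prop :=
  OrderBounded T ∧ BandPreserving T

/-- An `nb`-bounded operator: it maps some zero neighborhood to a topologically
bounded set. -/
def NbBounded {X : Type*} [Lattice X] [AddCommGroup X] [Module ℝ X]
    [TopologicalSpace X] (T : X →ₗ[ℝ] X) : Prop :=
  ∃ U ∈ 𝓝 (0 : X), IsVonNBounded ℝ (T '' U)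

/-- A `bb`-bounded operator: it maps topologically bounded sets to bounded sets. -/
def BbBounded {X : Type*} [Lattice X] [AddCommGroup X] [Module ℝ X]
    [TopologicalSpace X] (T : X →ₗ[ℝ] X) : Prop :=
  ∀ B : Set X, IsVonNBounded ℝ B → IsVonNBounded ℝ (T '' B)

/-- domination for continuous orthomorphisms: if `0 ≤ T ≤ S` and `S`
is a continuous orthomorphism, then so is `T`. -/
theorem domination_continuous {X : Type*} [Lattice X] [AddCommGroup X] [Module ℝ X]
    [TopologicalSpace X] [IsTopologicalAddGroup X] [ContinuousSMul ℝ X]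
    [CovariantClass X X (· + ·) (· ≤ ·)]
    (hls : LocallySolid X)
    (T S : X →ₗ[ℝ] X)
    (hTpos : ∀ x : X, 0 ≤ x → 0 ≤ T x)
    (hTS : ∀ x : X, 0 ≤ x → T x ≤ S x)
    (hS : Orthomorphism S) (hSc : Continuous S) :
    Orthomorphism T ∧ Continuous T := by
  -- T is monotone
  have hmono : ∀ a b : X, a ≤ b → T a ≤ T b := by
    intro a b hab
    have := hTpos (b - a) (by simpa using hab)
    rw [map_sub] at this
    exact sub_nonneg.mp this
  have habs : ∀ x : X, |T x| ≤ T |x| := by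
    intro x
    refine abs_le'.mpr ⟨hmono _ _ (le_abs_self x), ?_⟩
    have := hmono _ _ (neg_le.mpr (neg_le_abs x))
    rw [map_neg] at this
    exact neg_le_of_neg_le this
  have habsS : ∀ x : X, |T x| ≤ S |x| := fun x =>
    (habs x).trans (hTS _ (abs_nonneg x))
  refine ⟨⟨?_, ?_⟩, ?_⟩
  · -- order bounded
    intro a b
    refine ⟨T a, T b, ?_⟩
    rintro _ ⟨x, hx, rfl⟩
    exact ⟨hmono _ _ hx.1, hmono _ _ hx.2⟩
  · -- band preserving
    intro x y hxy
    have hS2 : abs (S |x|) ⊓ |y| = 0 := hS.2 |x| y (by rwa [abs_abs])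
    have hSx : (0:X) ≤ S |x| :=
      le_trans (hTpos _ (abs_nonneg x)) (hTS _ (abs_nonneg x))
    rw [abs_of_nonneg hSx] at hS2
    refine le_antisymm ?_ (le_inf (abs_nonneg _) (abs_nonneg _))
    calc |T x| ⊓ |y| ≤ S |x| ⊓ |y| := inf_le_inf_right _ (habsS x)
      _ = 0 := hS2
  · -- continuity
    have hcz : ContinuousAt T 0 := by
      rw [ContinuousAt, map_zero, Filter.tendsto_def]
      intro V hV
      obtain ⟨W, hW, hWsolid, hWV⟩ := hls V hV
      have hU0 : S ⁻¹' W ∈ 𝓝 (0 : X) := by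
        have h := hSc.tendsto 0
        rw [map_zero] at h
        exact h hW
      obtain ⟨U, hU, hUsolid, hUsub⟩ := hls _ hU0
      refine Filter.mem_of_superset hU ?_
      intro x hx
      have hxabs : |x| ∈ U := hUsolid |x| x (by rw [abs_abs]) hx
      have hSW : S |x| ∈ W := hUsub hxabs
      have hSx : (0:X) ≤ S |x| :=
        le_trans (hTpos _ (abs_nonneg x)) (hTS _ (abs_nonneg x))
      have : T x ∈ W :=
        hWsolid (T x) (S |x|) (by rw [abs_of_nonneg hSx]; exact habsS x) hSW
      exact hWV this
    exact continuous_of_continuousAt_zero T.toAddMonoidHom hcz
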